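/- arXiv:1904.00161 — 2 statements merged into one kernel-verified Lean document; each statement's English description precedes it below -/
import Mathlib

section
/- Let n ≥ 2 and let K₁, …, Kₙ be normal subgroups of a group G. Then H(K₁, …, Kₙ, ⊤) ≤ H(K₁, …, Kₙ), where ⊤ denotes G viewed as a subgroup of itself; that is, the (n+1)-fold Higgins commutator [K₁,…,Kₙ,G] is contained in the n-fold Higgins commutator [K₁,…,Kₙ]. -/
/-- The homomorphism on the free product `Monoid.CoprodI` of the subgroups `K i`
that is trivial on the `k`-th free factor and the canonical inclusion on every
other free factor. -/
def piHat {G : Type*} [Group G] {n : ℕ} (K : Fin n → Subgroup G) (k : Fin n) :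
    Monoid.CoprodI (fun i => ↥(K i)) →* Monoid.CoprodI (fun i => ↥(K i)) :=
  Monoid.CoprodI.lift
    (fun i => if i = k then 1 else Monoid.CoprodI.of (M := fun i => ↥(K i)) (i := i))

/-- The `n`-fold co-smash product `K₁ ◇ ⋯ ◇ Kₙ` of subgroups of `G`: the
intersection of the kernels of the homomorphisms `piHat K k`. -/
def cosmash {G : Type*} [Group G] {n : ℕ} (K : Fin n → Subgroup G) :
    Subgroup (Monoid.CoprodI (fun i => ↥(K i))) :=
  ⨅ k, (piHat K k).ker

/-- The `n`-fold Higgins commutator `H(K₁, …, Kₙ)` of subgroups of `G`: the image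
of the co-smash product under the homomorphism induced by the subgroup
inclusions. -/
def higgins {G : Type*} [Group G] {n : ℕ} (K : Fin n → Subgroup G) : Subgroup G :=
  (cosmash K).map (Monoid.CoprodI.lift (fun i => (K i).subtype))

namespace HigginsAux

open Monoid SemidirectProduct

variable {G : Type*} [Group G] {n : ℕ} (K : Fin n → Subgroup G) (hK : ∀ i, (K i).Normal)

/-- `K` with `⊤` appended. -/
def Ksnoc (K : Fin n → Subgroup G) : Fin (n + 1) → Subgroup G := Fin.snoc K ⊤

lemma Ksnoc_castSucc (j : Fin n) : Ksnoc K (Fin.castSucc j) = K j :=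
  Fin.snoc_castSucc ..

lemma Ksnoc_castSucc_le (j : Fin n) : Ksnoc K (Fin.castSucc j) ≤ K j :=
  le_of_eq (Ksnoc_castSucc K j)

/-- Conjugation action of `G` on the free product of the normal subgroups `K i`. -/
def conjAct (g : G) :
    Monoid.CoprodI (fun i => ↥(K i)) →* Monoid.CoprodI (fun i => ↥(K i)) :=
  Monoid.CoprodI.lift fun i =>
    (Monoid.CoprodI.of (M := fun i => ↥(K i)) (i := i)).comp
      (@MulAut.conjNormal G _ (K i) (hK i) g).toMonoidHom

lemma conjAct_of (g : G) {i : Fin n} (x : ↥(K i)) :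
    conjAct K hK g (Monoid.CoprodI.of (M := fun i => ↥(K i)) x) =
      Monoid.CoprodI.of (M := fun i => ↥(K i))
        (@MulAut.conjNormal G _ (K i) (hK i) g x) :=
  Monoid.CoprodI.lift_of _ _

lemma conjAct_comp (g h : G) :
    (conjAct K hK g).comp (conjAct K hK h) = conjAct K hK (g * h) := by
  apply Monoid.CoprodI.ext_hom
  intro i
  ext x
  simp [conjAct_of, map_mul, MulAut.mul_apply]

lemma conjAct_one : conjAct K hK 1 = MonoidHom.id _ := by
  apply Monoid.CoprodI.ext_hom
  intro i
  ext x
  simp [conjAct_of]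

/-- The conjugation action as a homomorphism to automorphisms. -/
def conjAut : G →* MulAut (Monoid.CoprodI (fun i => ↥(K i))) where
  toFun g := MonoidHom.toMulEquiv (conjAct K hK g) (conjAct K hK g⁻¹)
    (by rw [conjAct_comp, inv_mul_cancel, conjAct_one])
    (by rw [conjAct_comp, mul_inv_cancel, conjAct_one])
  map_one' := by
    ext x
    show conjAct K hK 1 x = x
    rw [conjAct_one]; rfl
  map_mul' g h := by
    ext x
    show conjAct K hK (g * h) x = conjAct K hK g (conjAct K hK h x)
    rw [← conjAct_comp]; rfl

lemma conjAut_apply (g : G) (x : Monoid.CoprodI (fun i => ↥(K i))) :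
    conjAut K hK g x = conjAct K hK g x := rfl

/-- The map from the `(n+1)`-fold free product to the semidirect product. -/
def phi : Monoid.CoprodI (fun i => ↥(Ksnoc K i)) →*
    (Monoid.CoprodI (fun i => ↥(K i))) ⋊[conjAut K hK] G :=
  Monoid.CoprodI.lift (Fin.lastCases
    (SemidirectProduct.inr.comp (Ksnoc K (Fin.last n)).subtype)
    (fun j => SemidirectProduct.inl.comp
      ((Monoid.CoprodI.of (M := fun i => ↥(K i)) (i := j)).comp
        (Subgroup.inclusion (Ksnoc_castSucc_le K j)))))

lemma phi_of_castSucc (j : Fin n) (x : ↥(Ksnoc K (Fin.castSucc j))) :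
    phi K hK (Monoid.CoprodI.of (M := fun i => ↥(Ksnoc K i)) x) =
      inl (Monoid.CoprodI.of (M := fun i => ↥(K i))
        (Subgroup.inclusion (Ksnoc_castSucc_le K j) x)) := by
  rw [phi, Monoid.CoprodI.lift_of]
  simp

lemma phi_of_last (x : ↥(Ksnoc K (Fin.last n))) :
    phi K hK (Monoid.CoprodI.of (M := fun i => ↥(Ksnoc K i)) x) = inr (x : G) := by
  rw [phi, Monoid.CoprodI.lift_of]
  simp

/-- The multiplication map on the semidirect product. -/
def mu : (Monoid.CoprodI (fun i => ↥(K i))) ⋊[conjAut K hK] G →* G :=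
  SemidirectProduct.lift (Monoid.CoprodI.lift fun i => (K i).subtype) (MonoidHom.id G)
    (by
      intro g
      apply Monoid.CoprodI.ext_hom
      intro i
      refine MonoidHom.ext fun x => ?_
      simp [conjAut_apply, conjAct_of, MulAut.conjNormal_apply, mul_assoc])

/-- The extension of `piHat K k` to the semidirect product. -/
def theta (k : Fin n) : (Monoid.CoprodI (fun i => ↥(K i))) ⋊[conjAut K hK] G →*
    (Monoid.CoprodI (fun i => ↥(K i))) ⋊[conjAut K hK] G :=
  SemidirectProduct.lift (inl.comp (piHat K k)) inr
    (by
      intro g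
      apply Monoid.CoprodI.ext_hom
      intro i
      refine MonoidHom.ext fun x => ?_
      simp only [MonoidHom.comp_apply, MulEquiv.coe_toMonoidHom, conjAut_apply, conjAct_of,
        MulAut.conj_apply, piHat, Monoid.CoprodI.lift_of]
      by_cases h : i = k
      · simp [h]
      · rw [if_neg h, ← map_inv, ← SemidirectProduct.inl_aut, conjAut_apply, conjAct_of])

end HigginsAux

/-- For `n ≥ 2` and normal subgroups `K₁, …, Kₙ` of `G`, the `(n+1)`-fold Higgins
commutator `H(K₁, …, Kₙ, ⊤)` is contained in the `n`-fold Higgins commutator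
`H(K₁, …, Kₙ)`. -/
theorem higgins_top_le_higgins {G : Type*} [Group G] {n : ℕ} (hn : 2 ≤ n)
    (K : Fin n → Subgroup G) (hK : ∀ i, (K i).Normal) :
    higgins (Fin.snoc K (⊤ : Subgroup G)) ≤ higgins K := by
  open HigginsAux SemidirectProduct in
  show higgins (Ksnoc K) ≤ higgins K
  intro y hy
  obtain ⟨c, hc, rfl⟩ := hy
  have hker : ∀ k, piHat (Ksnoc K) k c = 1 := fun k =>
    (Subgroup.mem_iInf.mp hc k : c ∈ (piHat _ k).ker)
  set k0 : Fin n := ⟨0, by omega⟩ with hk0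
  -- phi c lies in the kernel of rightHom
  have hτhom : (rightHom.comp (phi K hK)) =
      (rightHom.comp (phi K hK)).comp (piHat (Ksnoc K) (Fin.castSucc k0)) := by
    apply Monoid.CoprodI.ext_hom
    intro i
    induction i using Fin.lastCases with
    | last =>
      refine MonoidHom.ext fun x => ?_
      simp only [MonoidHom.comp_apply, piHat, Monoid.CoprodI.lift_of,
        if_neg ((Fin.castSucc_lt_last k0).ne' : ¬ Fin.last n = Fin.castSucc k0)]
    | cast j =>
      refine MonoidHom.ext fun x => ?_
      simp only [MonoidHom.comp_apply, piHat, Monoid.CoprodI.lift_of]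
      by_cases h : Fin.castSucc j = Fin.castSucc k0
      · simp [h, phi_of_castSucc]
      · simp [h, phi_of_castSucc]
  have hτ : rightHom (phi K hK c) = 1 := by
    have := congrArg (fun f => (f : _ →* G) c) hτhom
    simp only [MonoidHom.comp_apply] at this
    rw [this, hker, map_one, map_one]
  obtain ⟨p, hp⟩ : ∃ p, inl p = phi K hK c := by
    have : phi K hK c ∈ (inl (φ := conjAut K hK)).range := by
      rw [SemidirectProduct.range_inl_eq_ker_rightHom]
      exact hτ
    exact this
  -- p lies in cosmash K
  have hcomm : ∀ k : Fin n, (theta K hK k).comp (phi K hK) =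
      (phi K hK).comp (piHat (Ksnoc K) (Fin.castSucc k)) := by
    intro k
    apply Monoid.CoprodI.ext_hom
    intro i
    induction i using Fin.lastCases with
    | last =>
      refine MonoidHom.ext fun x => ?_
      simp only [MonoidHom.comp_apply, piHat, Monoid.CoprodI.lift_of,
        if_neg ((Fin.castSucc_lt_last k).ne' : ¬ Fin.last n = Fin.castSucc k)]
      simp [phi_of_last, theta]
    | cast j =>
      refine MonoidHom.ext fun x => ?_
      simp only [MonoidHom.comp_apply, piHat, Monoid.CoprodI.lift_of]
      by_cases h : j = k
      · simp [h, Fin.castSucc_inj, phi_of_castSucc, theta, piHat]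
      · have h' : ¬ Fin.castSucc j = Fin.castSucc k := by
          simpa [Fin.castSucc_inj] using h
        simp [h, h', phi_of_castSucc, theta, piHat]
  have hpk : ∀ k : Fin n, piHat K k p = 1 := by
    intro k
    have h1 : theta K hK k (phi K hK c) = 1 := by
      have := congrArg (fun f => (f : _ →* _) c) (hcomm k)
      simp only [MonoidHom.comp_apply] at this
      rw [this, hker, map_one]
    rw [← hp] at h1
    simp only [theta, SemidirectProduct.lift_inl] at h1
    exact SemidirectProduct.inl_injective (by simpa using h1)
  have hpmem : p ∈ cosmash K := Subgroup.mem_iInf.mpr fun k => hpk k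
  -- compute the image
  have hmu : (mu K hK).comp (phi K hK) =
      Monoid.CoprodI.lift (fun i => (Ksnoc K i).subtype) := by
    apply Monoid.CoprodI.ext_hom
    intro i
    induction i using Fin.lastCases with
    | last =>
      refine MonoidHom.ext fun x => ?_
      simp only [MonoidHom.comp_apply, Monoid.CoprodI.lift_of]
      simp [phi_of_last, mu]
    | cast j =>
      refine MonoidHom.ext fun x => ?_
      simp only [MonoidHom.comp_apply, Monoid.CoprodI.lift_of]
      simp [phi_of_castSucc, mu, Monoid.CoprodI.lift_of, Subgroup.coe_inclusion]
  refine ⟨p, hpmem, ?_⟩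
  have := congrArg (fun f => (f : _ →* G) c) hmu
  simp only [MonoidHom.comp_apply] at this
  rw [← this, ← hp]
  simp [mu]
end

section
/- Let n ≥ 3 and let K₁, …, Kₙ be normal subgroups of a group G. Then the n-fold Higgins commutator decomposes as a join of left-nested binary commutator subgroups over all permutations: H(K₁, …, Kₙ) = ⨆_{σ ∈ Equiv.Perm (Fin n)} ⁅⋯⁅⁅K_{σ(1)}, K_{σ(2)}⁆, K_{σ(3)}⁆, …, K_{σ(n)}⁆. -/
/-- The left-nested iterated commutator subgroup `⁅⋯⁅⁅K₁,K₂⁆,K₃⁆, …, Kₙ⁆`. -/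
def nestedCommutator {G : Type*} [Group G] : {n : ℕ} → (Fin n → Subgroup G) → Subgroup G
  | 0, _ => ⊥
  | _ + 1, K => (List.ofFn fun i => K i.succ).foldl (fun A B => ⁅A, B⁆) (K 0)

set_option linter.unusedSectionVars false

namespace HigginsAux
open Subgroup
open scoped commutatorElement

variable {G : Type*} [Group G]

theorem normal_iSup {ι : Sort*} (f : ι → Subgroup G) (hf : ∀ i, (f i).Normal) :
    (⨆ i, f i).Normal := by
  constructor
  intro x hx g
  refine Subgroup.iSup_induction f (C := fun y => g * y * g⁻¹ ∈ ⨆ i, f i) hx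
    (fun i y hy => le_iSup f i ((hf i).conj_mem y hy g)) (by simpa using one_mem _)
    (fun y z hy hz => ?_)
  have h : g * (y * z) * g⁻¹ = (g * y * g⁻¹) * (g * z * g⁻¹) := by group
  rw [h]; exact mul_mem hy hz

theorem commutator_iSup_left {ι : Sort*} (f : ι → Subgroup G) (B : Subgroup G)
    (hf : ∀ i, (f i).Normal) (hB : B.Normal) :
    ⁅⨆ i, f i, B⁆ = ⨆ i, ⁅f i, B⁆ := by
  refine le_antisymm ?_ (iSup_le fun i => commutator_mono (le_iSup f i) le_rfl)
  have hN : (⨆ i, ⁅f i, B⁆).Normal := normal_iSup _ fun i => by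
    haveI := hf i; haveI := hB; infer_instance
  rw [commutator_le]
  intro a ha b hb
  refine Subgroup.iSup_induction f (C := fun a => ∀ b ∈ B, ⁅a, b⁆ ∈ ⨆ i, ⁅f i, B⁆) ha
    (fun i y hy => fun b hb => le_iSup (fun i => ⁅f i, B⁆) i (commutator_mem_commutator hy hb))
    (fun b hb => by simpa [commutatorElement_def] using one_mem _)
    (fun y z hy hz => fun b hb => ?_) b hb
  have h : ⁅y * z, b⁆ = y * ⁅z, b⁆ * y⁻¹ * ⁅y, b⁆ := by
    simp only [commutatorElement_def]; group
  rw [h]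
  exact mul_mem (hN.conj_mem _ (hz b hb) y) (hy b hb)

theorem commutator_iSup_right {ι : Sort*} (A : Subgroup G) (f : ι → Subgroup G)
    (hA : A.Normal) (hf : ∀ i, (f i).Normal) :
    ⁅A, ⨆ i, f i⁆ = ⨆ i, ⁅A, f i⁆ := by
  rw [commutator_comm, commutator_iSup_left f A hf hA]
  exact iSup_congr fun i => commutator_comm _ _

set_option maxHeartbeats 1000000 in
/-- Three subgroups lemma, join form. -/
theorem commutator_commutator_le (X Y Z : Subgroup G)
    (hX : X.Normal) (hY : Y.Normal) (hZ : Z.Normal) :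
    ⁅X, ⁅Y, Z⁆⁆ ≤ ⁅⁅X, Y⁆, Z⁆ ⊔ ⁅⁅X, Z⁆, Y⁆ := by
  haveI := hX; haveI := hY; haveI := hZ
  set M : Subgroup G := ⁅⁅X, Y⁆, Z⁆ ⊔ ⁅⁅X, Z⁆, Y⁆ with hM
  haveI : M.Normal := by rw [hM]; infer_instance
  set q : G →* G ⧸ M := QuotientGroup.mk' M with hq
  set X' := Subgroup.map q X
  set Y' := Subgroup.map q Y
  set Z' := Subgroup.map q Z
  have h1 : ⁅⁅X', Y'⁆, Z'⁆ = ⊥ := by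
    rw [← Subgroup.map_commutator, ← Subgroup.map_commutator,
      Subgroup.map_eq_bot_iff, hq, QuotientGroup.ker_mk']
    exact le_sup_left
  have h2 : ⁅⁅X', Z'⁆, Y'⁆ = ⊥ := by
    rw [← Subgroup.map_commutator, ← Subgroup.map_commutator,
      Subgroup.map_eq_bot_iff, hq, QuotientGroup.ker_mk']
    exact le_sup_right
  have h2' : ⁅⁅Z', X'⁆, Y'⁆ = ⊥ := by rw [commutator_comm Z' X']; exact h2
  have key : ⁅⁅Y', Z'⁆, X'⁆ = ⊥ := commutator_commutator_eq_bot_of_rotate h2' h1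
  have key2 : Subgroup.map q ⁅X, ⁅Y, Z⁆⁆ = ⊥ := by
    rw [Subgroup.map_commutator, Subgroup.map_commutator]
    rw [commutator_comm]
    exact key
  rw [Subgroup.map_eq_bot_iff, hq, QuotientGroup.ker_mk'] at key2
  exact key2

/-! ### Nested commutators indexed by lists, and the support filtration `D` -/

variable {n : ℕ} (K : Fin n → Subgroup G)

/-- Left fold of commutators. -/
def foldc (A : Subgroup G) (w : List (Fin n)) : Subgroup G :=
  w.foldl (fun X j => ⁅X, K j⁆) A

@[simp] theorem foldc_nil (A : Subgroup G) : foldc K A [] = A := rfl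

theorem foldc_cons (A : Subgroup G) (j : Fin n) (w : List (Fin n)) :
    foldc K A (j :: w) = foldc K ⁅A, K j⁆ w := rfl

theorem foldc_append_singleton (A : Subgroup G) (w : List (Fin n)) (j : Fin n) :
    foldc K A (w ++ [j]) = ⁅foldc K A w, K j⁆ := by
  simp [foldc, List.foldl_append]

/-- The left-nested commutator of the subgroups along a list of indices. -/
def nest : List (Fin n) → Subgroup G
  | [] => ⊥
  | i :: w => foldc K (K i) w

@[simp] theorem nest_nil : nest K [] = ⊥ := rfl

@[simp] theorem nest_singleton (i : Fin n) : nest K [i] = K i := rfl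

theorem nest_cons (i : Fin n) (w : List (Fin n)) : nest K (i :: w) = foldc K (K i) w := rfl

theorem foldc_normal (hK : ∀ i, (K i).Normal) {A : Subgroup G} (hA : A.Normal)
    (w : List (Fin n)) : (foldc K A w).Normal := by
  induction w generalizing A with
  | nil => exact hA
  | cons j w ih =>
    rw [foldc_cons]
    exact ih (by haveI := hA; haveI := hK j; infer_instance)

theorem nest_normal (hK : ∀ i, (K i).Normal) (w : List (Fin n)) : (nest K w).Normal := by
  cases w with
  | nil => rw [nest_nil]; infer_instance
  | cons i w => exact foldc_normal K hK (hK i) w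

theorem foldc_mono {A B : Subgroup G} (h : A ≤ B) (w : List (Fin n)) :
    foldc K A w ≤ foldc K B w := by
  induction w generalizing A B with
  | nil => exact h
  | cons j w ih => exact ih (commutator_mono h le_rfl)

theorem foldc_le_self (hK : ∀ i, (K i).Normal) {A : Subgroup G} (hA : A.Normal)
    (w : List (Fin n)) : foldc K A w ≤ A := by
  induction w generalizing A with
  | nil => exact le_rfl
  | cons j w ih =>
    rw [foldc_cons]
    exact le_trans (ih (by haveI := hA; haveI := hK j; infer_instance))
      (by haveI := hA; exact Subgroup.commutator_le_left A (K j))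

theorem foldc_le_K (hK : ∀ i, (K i).Normal) {A : Subgroup G} (hA : A.Normal)
    {w : List (Fin n)} {i : Fin n} (hi : i ∈ w) : foldc K A w ≤ K i := by
  induction w generalizing A with
  | nil => simp at hi
  | cons j w ih =>
    rw [foldc_cons]
    rcases List.mem_cons.mp hi with rfl | hi
    · haveI := hA; haveI := hK i
      exact le_trans (foldc_le_self K hK (by infer_instance) w)
        (Subgroup.commutator_le_right A (K i))
    · exact ih (by haveI := hA; haveI := hK j; infer_instance) hi

theorem nest_le_K (hK : ∀ i, (K i).Normal) {w : List (Fin n)} {i : Fin n} (hi : i ∈ w) :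
    nest K w ≤ K i := by
  cases w with
  | nil => simp at hi
  | cons a w =>
    rw [nest_cons]
    rcases List.mem_cons.mp hi with rfl | hi
    · exact foldc_le_self K hK (hK i) w
    · exact foldc_le_K K hK (hK a) hi

theorem foldc_le_foldc (hK : ∀ i, (K i).Normal) {A B : Subgroup G} (hA : A.Normal) (h : A ≤ B)
    {u v : List (Fin n)} (huv : List.Sublist u v) : foldc K A v ≤ foldc K B u := by
  induction v generalizing A B u with
  | nil => rw [List.sublist_nil.mp huv]; exact h
  | cons k v ih =>
    rcases List.sublist_cons_iff.mp huv with hu | ⟨r, rfl, hr⟩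
    · rw [foldc_cons]
      refine ih (by haveI := hA; haveI := hK k; infer_instance) ?_ hu
      exact le_trans (by haveI := hA; exact Subgroup.commutator_le_left A (K k)) h
    · rw [foldc_cons, foldc_cons]
      exact ih (by haveI := hA; haveI := hK k; infer_instance) (commutator_mono h le_rfl) hr

theorem foldc_le_nest (hK : ∀ i, (K i).Normal) {A : Subgroup G} (hA : A.Normal)
    {u v : List (Fin n)} (hu : u ≠ []) (huv : List.Sublist u v) : foldc K A v ≤ nest K u := by
  induction v generalizing A u with
  | nil => exact absurd (List.sublist_nil.mp huv) hu
  | cons k v ih =>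
    rcases List.sublist_cons_iff.mp huv with h | ⟨r, rfl, hr⟩
    · rw [foldc_cons]
      exact ih (by haveI := hA; haveI := hK k; infer_instance) hu h
    · rw [foldc_cons, nest_cons]
      exact foldc_le_foldc K hK (by haveI := hA; haveI := hK k; infer_instance)
        (by haveI := hA; exact Subgroup.commutator_le_right A (K k)) hr

theorem nest_le_nest (hK : ∀ i, (K i).Normal) {u v : List (Fin n)} (hu : u ≠ [])
    (huv : List.Sublist u v) : nest K v ≤ nest K u := by
  cases v with
  | nil => exact absurd (List.sublist_nil.mp huv) hu
  | cons a v =>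
    rcases List.sublist_cons_iff.mp huv with h | ⟨r, rfl, hr⟩
    · rw [nest_cons]; exact foldc_le_nest K hK (hK a) hu h
    · rcases eq_or_ne r [] with rfl | hr'
      · rw [nest_cons, nest_singleton]; exact foldc_le_self K hK (hK a) v
      · rw [nest_cons, nest_cons]
        exact foldc_le_foldc K hK (hK a) le_rfl hr

theorem nest_append_singleton {w : List (Fin n)} (hw : w ≠ []) (j : Fin n) :
    nest K (w ++ [j]) = ⁅nest K w, K j⁆ := by
  cases w with
  | nil => exact absurd rfl hw
  | cons a w => rw [List.cons_append, nest_cons, nest_cons, foldc_append_singleton]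

/-- The support filtration: join of all nested commutators whose support contains `S`. -/
def DD (S : Finset (Fin n)) : Subgroup G :=
  ⨆ w : {w : List (Fin n) // w ≠ [] ∧ S ⊆ w.toFinset}, nest K w

theorem nest_le_DD {w : List (Fin n)} (hw : w ≠ []) {S : Finset (Fin n)}
    (hS : S ⊆ w.toFinset) : nest K w ≤ DD K S :=
  le_iSup (fun w : {w : List (Fin n) // w ≠ [] ∧ S ⊆ w.toFinset} => nest K (w : List (Fin n)))
    ⟨w, hw, hS⟩

theorem DD_normal (hK : ∀ i, (K i).Normal) (S : Finset (Fin n)) : (DD K S).Normal :=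
  normal_iSup _ fun w => nest_normal K hK w

theorem DD_antitone {S S' : Finset (Fin n)} (h : S ⊆ S') : DD K S' ≤ DD K S :=
  iSup_le fun w => nest_le_DD K w.2.1 (le_trans h w.2.2)

theorem K_le_DD (i : Fin n) : K i ≤ DD K {i} := by
  have := nest_le_DD K (w := [i]) (by simp) (S := {i}) (by simp)
  simpa using this

theorem DD_le_K (hK : ∀ i, (K i).Normal) {S : Finset (Fin n)} {i : Fin n} (hi : i ∈ S) :
    DD K S ≤ K i :=
  iSup_le fun w => nest_le_K K hK (List.mem_toFinset.mp (w.2.2 hi))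

theorem commutator_DD_K_le (hK : ∀ i, (K i).Normal) (S : Finset (Fin n)) (j : Fin n) :
    ⁅DD K S, K j⁆ ≤ DD K (insert j S) := by
  rw [DD]
  rw [commutator_iSup_left (fun w : {w : List (Fin n) // w ≠ [] ∧ S ⊆ w.toFinset} =>
    nest K (w : List (Fin n))) (K j) (fun w => nest_normal K hK w) (hK j)]
  refine iSup_le fun w => ?_
  rw [← nest_append_singleton K w.2.1 j]
  refine nest_le_DD K (by simp) ?_
  intro x hx
  simp only [List.toFinset_append, List.toFinset_cons, List.toFinset_nil, Finset.mem_union]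
  rcases Finset.mem_insert.mp hx with rfl | hx
  · right; simp
  · exact Or.inl (w.2.2 hx)

theorem nest_nest_commutator_le (hK : ∀ i, (K i).Normal) (u : List (Fin n)) :
    ∀ w : List (Fin n), ⁅nest K w, nest K u⁆ ≤ DD K (w.toFinset ∪ u.toFinset) := by
  induction u using List.reverseRecOn with
  | nil => intro w; simp [Subgroup.commutator_bot_right]
  | append_singleton u i ih =>
    intro w
    rcases eq_or_ne w [] with rfl | hw
    · simp [Subgroup.commutator_bot_left]
    rcases eq_or_ne u [] with rfl | hu
    · simp only [List.nil_append, nest_singleton]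
      rw [← nest_append_singleton K hw i]
      refine nest_le_DD K (by simp) ?_
      intro x hx; simp only [List.toFinset_append, List.toFinset_cons, List.toFinset_nil,
        Finset.mem_union] at hx ⊢
      tauto
    · rw [nest_append_singleton K hu i]
      refine le_trans (commutator_commutator_le (nest K w) (nest K u) (K i)
        (nest_normal K hK w) (nest_normal K hK u) (hK i)) (sup_le ?_ ?_)
      · refine le_trans (commutator_mono (ih w) le_rfl) ?_
        refine le_trans (commutator_DD_K_le K hK _ i) (DD_antitone K ?_)
        intro x hx
        simp only [Finset.mem_insert, Finset.mem_union, List.toFinset_append,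
          List.toFinset_cons, List.toFinset_nil, List.mem_toFinset] at hx ⊢
        tauto
      · rw [← nest_append_singleton K hw i]
        refine le_trans (ih (w ++ [i])) (DD_antitone K ?_)
        intro x hx
        simp only [Finset.mem_union, List.toFinset_append, List.toFinset_cons,
          List.toFinset_nil, List.mem_toFinset] at hx ⊢
        tauto

theorem DD_commutator_le (hK : ∀ i, (K i).Normal) (S T : Finset (Fin n)) :
    ⁅DD K S, DD K T⁆ ≤ DD K (S ∪ T) := by
  rw [DD]
  rw [commutator_iSup_left (fun w : {w : List (Fin n) // w ≠ [] ∧ S ⊆ w.toFinset} =>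
    nest K (w : List (Fin n))) (DD K T) (fun w => nest_normal K hK w) (DD_normal K hK T)]
  refine iSup_le fun w => ?_
  rw [DD]
  rw [commutator_iSup_right (nest K (w : List (Fin n)))
    (fun u : {u : List (Fin n) // u ≠ [] ∧ T ⊆ u.toFinset} => nest K (u : List (Fin n)))
    (nest_normal K hK w) (fun u => nest_normal K hK u)]
  refine iSup_le fun u => ?_
  refine le_trans (nest_nest_commutator_le K hK u w) (DD_antitone K ?_)
  exact Finset.union_subset_union w.2.2 u.2.2

/-! ### Cubes and the difference calculus -/

/-- A cube of group elements indexed by finite sets of coordinates. -/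
abbrev Cube (G : Type*) (n : ℕ) := Finset (Fin n) → G

/-- Shift of a cube in direction `j`. -/
def shc {G : Type*} {n : ℕ} (j : Fin n) (h : Cube G n) : Cube G n := fun U => h (insert j U)

/-- Iterated shift along a list of directions. -/
def shL {G : Type*} {n : ℕ} (V : List (Fin n)) (h : Cube G n) : Cube G n := V.foldr shc h

@[simp] theorem shL_nil {h : Cube G n} : shL [] h = h := rfl

theorem shL_cons {V : List (Fin n)} {j : Fin n} {h : Cube G n} :
    shL (j :: V) h = shc j (shL V h) := rfl

theorem shc_comm (j k : Fin n) (h : Cube G n) : shc j (shc k h) = shc k (shc j h) := by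
  funext U; simp only [shc]; rw [Finset.insert_comm]

theorem shL_shc (V : List (Fin n)) (j : Fin n) (h : Cube G n) :
    shL V (shc j h) = shc j (shL V h) := by
  induction V with
  | nil => rfl
  | cons k V ih => rw [shL_cons, shL_cons, ih, shc_comm]

theorem shL_shc_append (V : List (Fin n)) (j : Fin n) (h : Cube G n) :
    shL V (shc j h) = shL (V ++ [j]) h := by
  rw [shL, shL, List.foldr_append]; rfl

theorem shc_mul (j : Fin n) (h h' : Cube G n) : shc j (h * h') = shc j h * shc j h' := rfl

theorem shL_mul (V : List (Fin n)) (h h' : Cube G n) :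
    shL V (h * h') = shL V h * shL V h' := by
  induction V with
  | nil => rfl
  | cons k V ih => rw [shL_cons, shL_cons, shL_cons, ih, shc_mul]

@[simp] theorem shc_one (j : Fin n) : shc j (1 : Cube G n) = 1 := rfl

@[simp] theorem shL_one (V : List (Fin n)) : shL V (1 : Cube G n) = 1 := by
  induction V with
  | nil => rfl
  | cons k V ih => rw [shL_cons, ih, shc_one]

/-- The iterated difference of a cube along a list of directions, evaluated at `∅`. -/
def gc {G : Type*} [Group G] {n : ℕ} : List (Fin n) → Cube G n → G
  | [], h => h ∅
  | j :: w, h => (gc w (shc j h))⁻¹ * gc w h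

@[simp] theorem gc_nil (h : Cube G n) : gc [] h = h ∅ := rfl

theorem gc_cons (j : Fin n) (w : List (Fin n)) (h : Cube G n) :
    gc (j :: w) h = (gc w (shc j h))⁻¹ * gc w h := rfl

@[simp] theorem gc_one (w : List (Fin n)) : gc w (1 : Cube G n) = 1 := by
  induction w with
  | nil => rfl
  | cons j w ih => rw [gc_cons, shc_one, ih]; simp

/-- Coherence of a cube with respect to the filtration `DD K`. -/
def Coh (K : Fin n → Subgroup G) (h : Cube G n) : Prop :=
  ∀ (w V : List (Fin n)), gc w (shL V h) ∈ DD K w.toFinset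

theorem Coh.shc' {K : Fin n → Subgroup G} {h : Cube G n} (hh : Coh K h) (j : Fin n) :
    Coh K (shc j h) := fun w V => by rw [shL_shc_append]; exact hh w (V ++ [j])

theorem Coh.one (K : Fin n → Subgroup G) : Coh K (1 : Cube G n) := by
  intro w V; rw [shL_one, gc_one]; exact one_mem _

/-- The pair space with diagonal shifts. -/
def Shp {G : Type*} {n : ℕ} (j : Fin n) (p : Cube G n × Cube G n) : Cube G n × Cube G n :=
  (shc j p.1, shc j p.2)

def selc {G : Type*} {n : ℕ} (s : Bool) (p : Cube G n × Cube G n) : Cube G n :=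
  if s then p.1 else p.2

theorem selc_Shp (s : Bool) (j : Fin n) (p : Cube G n × Cube G n) :
    selc s (Shp j p) = shc j (selc s p) := by cases s <;> rfl

/-- The difference of a pair-function in direction `j`. -/
def Dl {G : Type*} [Group G] {n : ℕ} (j : Fin n) (F : Cube G n × Cube G n → G) :
    Cube G n × Cube G n → G := fun p => (F (Shp j p))⁻¹ * F p

/-- Syntactic class of "good" pair functions with their filtration degrees. -/
inductive Gd {G : Type*} [Group G] {n : ℕ} : Finset (Fin n) → (Cube G n × Cube G n → G) → Prop
  | prim (w V : List (Fin n)) (s : Bool) :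
      Gd w.toFinset (fun p => gc w (shL V (selc s p)))
  | mul {S : Finset (Fin n)} {F F' : Cube G n × Cube G n → G} :
      Gd S F → Gd S F' → Gd S (fun p => F p * F' p)
  | inv {S : Finset (Fin n)} {F : Cube G n × Cube G n → G} :
      Gd S F → Gd S (fun p => (F p)⁻¹)
  | conj {S T : Finset (Fin n)} {F C : Cube G n × Cube G n → G} :
      Gd S F → Gd T C → Gd S (fun p => (C p)⁻¹ * F p * C p)
  | comm {S T : Finset (Fin n)} {F F' : Cube G n × Cube G n → G} :
      Gd S F → Gd T F' → Gd (S ∪ T) (fun p => ⁅F p, F' p⁆)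
  | mono {S S' : Finset (Fin n)} {F : Cube G n × Cube G n → G} :
      S' ⊆ S → Gd S F → Gd S' F

theorem Gd.compShp {S : Finset (Fin n)} {F : Cube G n × Cube G n → G} (hF : Gd S F)
    (j : Fin n) : Gd S (fun p => F (Shp j p)) := by
  induction hF with
  | prim w V s =>
    have e : (fun p : Cube G n × Cube G n => gc w (shL V (selc s (Shp j p))))
        = fun p => gc w (shL (V ++ [j]) (selc s p)) := by
      funext p; rw [selc_Shp, shL_shc_append]
    exact e ▸ Gd.prim w (V ++ [j]) s
  | mul _ _ ih ih' => exact Gd.mul ih ih'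
  | inv _ ih => exact Gd.inv ih
  | conj _ _ ih ihc => exact Gd.conj ih ihc
  | comm _ _ ih ih' => exact Gd.comm ih ih'
  | mono hsub _ ih => exact Gd.mono hsub ih

theorem Gd.delta {S : Finset (Fin n)} {F : Cube G n × Cube G n → G} (hF : Gd S F)
    (j : Fin n) : Gd (insert j S) (Dl j F) := by
  induction hF with
  | prim w V s =>
    have e : Dl j (fun p => gc w (shL V (selc s p)))
        = fun p : Cube G n × Cube G n => gc (j :: w) (shL V (selc s p)) := by
      funext p
      rw [Dl, gc_cons]
      simp only [selc_Shp, shL_shc]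
    rw [e]
    have : (j :: w).toFinset = insert j w.toFinset := by simp
    exact this ▸ Gd.prim (j :: w) V s
  | @mul S F F' hF hF' ih ih' =>
    have e : Dl j (fun p => F p * F' p)
        = fun p => ((fun q => F' (Shp j q)) p)⁻¹ * (Dl j F) p * ((fun q => F' (Shp j q)) p)
            * (Dl j F') p := by
      funext p; simp only [Dl]; group
    rw [e]
    exact Gd.mul (Gd.conj ih (hF'.compShp j)) ih'
  | @inv S F hF ih =>
    have e : Dl j (fun p => (F p)⁻¹)
        = fun p => (((fun q => (F q)⁻¹)) p)⁻¹ * ((fun q => ((Dl j F) q)⁻¹) p)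
            * ((fun q => (F q)⁻¹) p) := by
      funext p; simp only [Dl]; group
    rw [e]
    exact Gd.conj (Gd.inv ih) (Gd.inv hF)
  | @conj S T F C hF hC ih ihc =>
    -- ρ = C * (Dl j C)⁻¹ * C⁻¹,  q = ⁅F⁻¹, ρ⁆, result = (C∘Sh)⁻¹ * (Dl j F * q) * (C∘Sh)
    have e : Dl j (fun p => (C p)⁻¹ * F p * C p)
        = fun p => (C (Shp j p))⁻¹ *
            ((Dl j F) p * ⁅(F p)⁻¹, ((C p)⁻¹)⁻¹ * ((Dl j C) p)⁻¹ * (C p)⁻¹⁆) *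
            (C (Shp j p)) := by
      funext p; simp only [Dl, commutatorElement_def]; group
    rw [e]
    refine Gd.conj (Gd.mul ih ?_) (hC.compShp j)
    refine Gd.mono ?_ (Gd.comm (Gd.inv hF) (Gd.conj (Gd.inv ihc) (Gd.inv hC)))
    intro x hx
    simp only [Finset.mem_insert, Finset.mem_union] at hx ⊢
    tauto
  | @comm S T F F' hF hF' ih ih' =>
    have e : Dl j (fun p => ⁅F p, F' p⁆)
        = fun p =>
            (((fun q => (F' q)⁻¹) p)⁻¹ *
              ((fun q => (⁅F q, ((Dl j F') q)⁻¹⁆)⁻¹) p) * ((fun q => (F' q)⁻¹) p)) *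
            ((⁅F p, F' p⁆)⁻¹ *
              (((fun q => (F q)⁻¹) p)⁻¹ *
                ( ((fun q => (F' q)⁻¹) p)⁻¹ *
                    ((fun q => (⁅((Dl j F) q)⁻¹, ((Dl j F') q)⁻¹⁆)⁻¹) p) *
                    ((fun q => (F' q)⁻¹) p) *
                  ((fun q => (⁅((Dl j F) q)⁻¹, F' q⁆)⁻¹) p) ) *
                ((fun q => (F q)⁻¹) p)) *
              ⁅F p, F' p⁆) := by
      funext p; simp only [Dl, commutatorElement_def]; group
    rw [e]
    have hsub1 : insert j (S ∪ T) ⊆ S ∪ insert j T := by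
      intro x hx; simp only [Finset.mem_insert, Finset.mem_union] at hx ⊢; tauto
    have hsub2 : insert j (S ∪ T) ⊆ insert j S ∪ insert j T := by
      intro x hx; simp only [Finset.mem_insert, Finset.mem_union] at hx ⊢; tauto
    have hsub3 : insert j (S ∪ T) ⊆ insert j S ∪ T := by
      intro x hx; simp only [Finset.mem_insert, Finset.mem_union] at hx ⊢; tauto
    refine Gd.mul ?_ ?_
    · exact Gd.conj (Gd.mono hsub1 (Gd.inv (Gd.comm hF (Gd.inv ih')))) (Gd.inv hF')
    · refine Gd.conj (Gd.conj (Gd.mul (Gd.conj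
        (Gd.mono hsub2 (Gd.inv (Gd.comm (Gd.inv ih) (Gd.inv ih')))) (Gd.inv hF'))
        (Gd.mono hsub3 (Gd.inv (Gd.comm (Gd.inv ih) hF')))) (Gd.inv hF)) (Gd.comm hF hF')
  | @mono S S' F hsub hF ih =>
    exact Gd.mono (Finset.insert_subset_insert j hsub) ih

/-- Members of `Gd S` take values in `DD K S` at coherent pairs. -/
theorem Gd.memDD (K : Fin n → Subgroup G) (hK : ∀ i, (K i).Normal)
    {S : Finset (Fin n)} {F : Cube G n × Cube G n → G} (hF : Gd S F)
    {p : Cube G n × Cube G n} (hp1 : Coh K p.1) (hp2 : Coh K p.2) : F p ∈ DD K S := by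
  induction hF with
  | prim w V s =>
    cases s
    · exact hp2 w V
    · exact hp1 w V
  | mul _ _ ih ih' => exact mul_mem ih ih'
  | inv _ ih => exact inv_mem ih
  | @conj S' T' F' C' hF' hC' ih ihc =>
    have := (DD_normal K hK S').conj_mem (F' p) ih ((C' p)⁻¹)
    simpa using this
  | comm _ _ ih ih' =>
    exact DD_commutator_le K hK _ _ (commutator_mem_commutator ih ih')
  | mono hsub _ ih => exact DD_antitone K hsub ih

/-- Coherent cubes are closed under pointwise multiplication. -/
theorem Coh.mul {K : Fin n → Subgroup G} (hK : ∀ i, (K i).Normal) {h h' : Cube G n}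
    (hh : Coh K h) (hh' : Coh K h') : Coh K (h * h') := by
  have GdM : ∀ (w V : List (Fin n)),
      Gd w.toFinset (fun p : Cube G n × Cube G n => gc w (shL V (p.1 * p.2))) := by
    intro w
    induction w with
    | nil =>
      intro V
      have e : (fun p : Cube G n × Cube G n => gc [] (shL V (p.1 * p.2)))
          = fun p => (gc [] (shL V (selc true p))) * (gc [] (shL V (selc false p))) := by
        funext p
        rw [shL_mul]
        rfl
      rw [List.toFinset_nil, e]
      exact Gd.mul (Gd.prim [] V true) (Gd.prim [] V false)
    | cons j w ih =>
      intro V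
      have e : (fun p : Cube G n × Cube G n => gc (j :: w) (shL V (p.1 * p.2)))
          = Dl j (fun p : Cube G n × Cube G n => gc w (shL V (p.1 * p.2))) := by
        funext p
        rw [Dl, gc_cons]
        congr 2
        show gc w (shc j (shL V (p.1 * p.2))) = gc w (shL V ((Shp j p).1 * (Shp j p).2))
        rw [Shp, ← shc_mul, shL_shc]
      rw [List.toFinset_cons, e]
      exact (ih V).delta j
  intro w V
  exact (GdM w V).memDD K hK (p := (h, h')) hh hh'

/-! ### The free product side -/

/-- The canonical homomorphism from the free product to `G`. -/
def kap (K : Fin n → Subgroup G) : Monoid.CoprodI (fun i => ↥(K i)) →* G :=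
  Monoid.CoprodI.lift (fun i => (K i).subtype)

/-- Deletion of all factors with index in `U`. -/
def delHom (K : Fin n → Subgroup G) (U : Finset (Fin n)) :
    Monoid.CoprodI (fun i => ↥(K i)) →* Monoid.CoprodI (fun i => ↥(K i)) :=
  Monoid.CoprodI.lift
    (fun i => if i ∈ U then 1 else Monoid.CoprodI.of (M := fun i => ↥(K i)) (i := i))

theorem delHom_of (K : Fin n → Subgroup G) (U : Finset (Fin n)) {i : Fin n} (a : ↥(K i)) :
    delHom K U (Monoid.CoprodI.of a)
      = if i ∈ U then 1 else Monoid.CoprodI.of (M := fun i => ↥(K i)) a := by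
  rw [delHom, Monoid.CoprodI.lift_of]
  split_ifs <;> simp

theorem piHat_eq_delHom (K : Fin n → Subgroup G) (k : Fin n) :
    piHat K k = delHom K {k} := by
  refine Monoid.CoprodI.ext_hom _ _ fun i => MonoidHom.ext fun a => ?_
  simp only [MonoidHom.comp_apply, piHat, Monoid.CoprodI.lift_of, delHom]
  by_cases h : i = k
  · subst h
    rw [if_pos rfl, if_pos (Finset.mem_singleton_self i)]
  · rw [if_neg h, if_neg (fun hh => h (Finset.mem_singleton.mp hh))]

theorem delHom_comp_piHat (K : Fin n → Subgroup G) {U : Finset (Fin n)} {k : Fin n}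
    (hk : k ∈ U) : (delHom K U).comp (piHat K k) = delHom K U := by
  refine Monoid.CoprodI.ext_hom _ _ fun i => MonoidHom.ext fun a => ?_
  simp only [MonoidHom.comp_apply, piHat, Monoid.CoprodI.lift_of]
  by_cases h : i = k
  · subst h
    rw [if_pos rfl, delHom_of, if_pos hk]
    simp
  · rw [if_neg h]

theorem delHom_empty (K : Fin n → Subgroup G) (x : Monoid.CoprodI (fun i => ↥(K i))) :
    delHom K ∅ x = x := by
  have : delHom K ∅ = MonoidHom.id _ := by
    refine Monoid.CoprodI.ext_hom _ _ fun i => MonoidHom.ext fun a => ?_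
    simp [delHom, Monoid.CoprodI.lift_of]
  rw [this]; rfl

/-- The cube of images of all deletions of an element of the free product. -/
def Psi (K : Fin n → Subgroup G) (x : Monoid.CoprodI (fun i => ↥(K i))) : Cube G n :=
  fun U => kap K (delHom K U x)

theorem Psi_one (K : Fin n → Subgroup G) : Psi K 1 = 1 := by
  funext U; simp [Psi]

theorem Psi_mul (K : Fin n → Subgroup G) (x y : Monoid.CoprodI (fun i => ↥(K i))) :
    Psi K (x * y) = Psi K x * Psi K y := by
  funext U; simp [Psi]

/-- The cube of a generator. -/
def Ecube (i : Fin n) (g : G) : Cube G n := fun U => if i ∈ U then 1 else g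

theorem Psi_of (K : Fin n → Subgroup G) {i : Fin n} (a : ↥(K i)) :
    Psi K (Monoid.CoprodI.of a) = Ecube i (a : G) := by
  funext U
  rw [Psi, Ecube, delHom_of]
  split_ifs with h
  · simp
  · rw [kap, Monoid.CoprodI.lift_of]; rfl

theorem shc_Ecube (j i : Fin n) (g : G) :
    shc j (Ecube i g) = if j = i then (1 : Cube G n) else Ecube i g := by
  funext U
  by_cases h : j = i
  · subst h; simp [shc, Ecube]
  · have hij : ¬ i = j := fun hh => h hh.symm
    simp [shc, Ecube, if_neg h, Finset.mem_insert, hij]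

theorem gc_Ecube (K : Fin n → Subgroup G) {i : Fin n} {g : G} (hg : g ∈ K i) :
    ∀ w : List (Fin n), gc w (Ecube i g) ∈ DD K (insert i w.toFinset) := by
  intro w
  induction w with
  | nil =>
    simpa [Ecube] using K_le_DD K i hg
  | cons j w ih =>
    rw [gc_cons, shc_Ecube]
    by_cases h : j = i
    · subst h
      rw [if_pos rfl, gc_one, inv_one, one_mul]
      refine DD_antitone K ?_ ih
      intro x hx
      simp only [Finset.mem_insert, List.toFinset_cons] at hx ⊢
      tauto
    · rw [if_neg h]
      simp only [inv_mul_cancel]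
      exact one_mem _

theorem shL_Ecube (V : List (Fin n)) (i : Fin n) (g : G) :
    shL V (Ecube i g) = if i ∈ V then (1 : Cube G n) else Ecube i g := by
  induction V with
  | nil => simp
  | cons j V ih =>
    rw [shL_cons, ih]
    by_cases h : i ∈ V
    · rw [if_pos h, if_pos (List.mem_cons_of_mem j h), shc_one]
    · rw [if_neg h, shc_Ecube]
      by_cases h2 : j = i
      · subst h2; rw [if_pos rfl, if_pos List.mem_cons_self]
      · have hi : i ∉ j :: V := by
          simp only [List.mem_cons, not_or]
          exact ⟨fun hh => h2 hh.symm, h⟩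
        rw [if_neg h2, if_neg hi]

theorem Coh_Ecube (K : Fin n → Subgroup G) {i : Fin n} {g : G} (hg : g ∈ K i) :
    Coh K (Ecube i g) := by
  intro w V
  rw [shL_Ecube]
  split_ifs with h
  · rw [gc_one]; exact one_mem _
  · exact DD_antitone K (Finset.subset_insert i _) (gc_Ecube K hg w)

theorem Coh_Psi (K : Fin n → Subgroup G) (hK : ∀ i, (K i).Normal)
    (x : Monoid.CoprodI (fun i => ↥(K i))) : Coh K (Psi K x) := by
  induction x using Monoid.CoprodI.induction_on with
  | one => rw [Psi_one]; exact Coh.one K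
  | of i a => rw [Psi_of]; exact Coh_Ecube K a.2
  | mul x y hx hy => rw [Psi_mul]; exact Coh.mul hK hx hy

theorem gc_Psi_of_cosmash (K : Fin n → Subgroup G) {x : Monoid.CoprodI (fun i => ↥(K i))}
    (hx : ∀ k, piHat K k x = 1) (w : List (Fin n)) : gc w (Psi K x) = kap K x := by
  have hdel : ∀ U : Finset (Fin n), U ≠ ∅ → delHom K U x = 1 := by
    intro U hU
    obtain ⟨k, hk⟩ := Finset.nonempty_iff_ne_empty.mpr hU
    have := delHom_comp_piHat K (U := U) (k := k) hk
    calc delHom K U x = (delHom K U).comp (piHat K k) x := by rw [this]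
    _ = delHom K U (piHat K k x) := rfl
    _ = 1 := by rw [hx k, map_one]
  induction w with
  | nil => rw [gc_nil, Psi, delHom_empty]
  | cons j w ih =>
    have hsh : shc j (Psi K x) = 1 := by
      funext U
      have : delHom K (insert j U) x = 1 := hdel _ (by simp [Finset.insert_ne_empty])
      simp [shc, Psi, this]
    rw [gc_cons, hsh, gc_one, inv_one, one_mul, ih]

/-! ### Relating `nest` to `nestedCommutator`, and the final assembly -/

theorem nest_ofFn (hn : n ≠ 0) (σ : Fin n → Fin n) :
    nest K (List.ofFn σ) = nestedCommutator (fun i => K (σ i)) := by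
  cases n with
  | zero => exact absurd rfl hn
  | succ m =>
    rw [List.ofFn_succ, nest_cons]
    show foldc K (K (σ 0)) (List.ofFn fun i => σ i.succ)
      = (List.ofFn fun i => K (σ i.succ)).foldl (fun A B => ⁅A, B⁆) (K (σ 0))
    have h : (List.ofFn fun i => K (σ i.succ)) = List.map K (List.ofFn fun i => σ i.succ) := by
      rw [List.map_ofFn]; rfl
    rw [h, List.foldl_map]
    rfl

theorem DD_univ_le (hn : n ≠ 0) (hK : ∀ i, (K i).Normal) :
    DD K Finset.univ ≤ ⨆ σ : Equiv.Perm (Fin n), nestedCommutator (fun i => K (σ i)) := by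
  haveI : NeZero n := ⟨hn⟩
  refine iSup_le fun wp => ?_
  obtain ⟨w, hwne, hwsub⟩ := wp
  set w' := w.dedup with hw'
  have hsub : List.Sublist w' w := List.dedup_sublist w
  have hnodup : w'.Nodup := List.nodup_dedup w
  have htf : w'.toFinset = Finset.univ := by
    ext a
    simp only [List.mem_toFinset, hw', List.mem_dedup, Finset.mem_univ, iff_true]
    exact List.mem_toFinset.mp (hwsub (Finset.mem_univ a))
  have hw'ne : w' ≠ [] := by
    intro hh
    rw [hh] at htf
    have : (0 : Fin n) ∈ ([] : List (Fin n)).toFinset := htf ▸ Finset.mem_univ 0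
    simp at this
  have hlen : w'.length = n := by
    have h1 := List.toFinset_card_of_nodup hnodup
    rw [htf, Finset.card_univ, Fintype.card_fin] at h1
    exact h1.symm
  have hinj : Function.Injective (fun i : Fin n => w'.get (Fin.cast hlen.symm i)) := by
    intro a b hab
    have h2 := (List.nodup_iff_injective_get.mp hnodup) hab
    have h3 : ((Fin.cast hlen.symm a : Fin w'.length) : ℕ)
        = ((Fin.cast hlen.symm b : Fin w'.length) : ℕ) := congrArg Fin.val h2
    exact Fin.ext (by simpa using h3)
  let f : Fin n → Fin n := fun i => w'.get (Fin.cast hlen.symm i)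
  let σ : Equiv.Perm (Fin n) := Equiv.ofBijective f ((Finite.injective_iff_bijective).mp hinj)
  have hofn : List.ofFn (⇑σ) = w' := by
    refine List.ext_get ?_ fun m h1 h2 => ?_
    · simp [hlen]
    · rw [List.get_ofFn]
      show w'.get _ = w'.get _
      exact congrArg w'.get (Fin.ext (by simp))
  refine le_trans (nest_le_nest K hK hw'ne hsub) ?_
  refine le_trans (le_of_eq ?_) (le_iSup (fun σ : Equiv.Perm (Fin n) =>
    nestedCommutator (fun i => K (σ i))) σ)
  rw [← nest_ofFn K hn (⇑σ), hofn]

/-! ### The easy direction -/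

theorem foldc_bot {H : Type*} [Group H] (F : Fin n → Subgroup H) (w : List (Fin n)) :
    foldc F ⊥ w = ⊥ := by
  induction w with
  | nil => rfl
  | cons j w ih => rw [foldc_cons, Subgroup.commutator_bot_left]; exact ih

theorem foldc_eq_bot {H : Type*} [Group H] {F : Fin n → Subgroup H} {k : Fin n}
    (hFk : F k = ⊥) (A : Subgroup H) {w : List (Fin n)} (hk : k ∈ w) : foldc F A w = ⊥ := by
  induction w generalizing A with
  | nil => simp at hk
  | cons j w ih =>
    rw [foldc_cons]
    rcases List.mem_cons.mp hk with rfl | hk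
    · rw [hFk, Subgroup.commutator_bot_right]
      exact foldc_bot F w
    · exact ih _ hk

theorem nest_eq_bot {H : Type*} [Group H] {F : Fin n → Subgroup H} {k : Fin n}
    (hFk : F k = ⊥) {w : List (Fin n)} (hk : k ∈ w) : nest F w = ⊥ := by
  cases w with
  | nil => rfl
  | cons a w =>
    rw [nest_cons]
    rcases List.mem_cons.mp hk with rfl | hk
    · rw [hFk]; exact foldc_bot F w
    · exact foldc_eq_bot hFk _ hk

theorem map_foldc {H H' : Type*} [Group H] [Group H'] (f : H →* H') (F : Fin n → Subgroup H)
    (A : Subgroup H) (w : List (Fin n)) :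
    (foldc F A w).map f = foldc (fun i => (F i).map f) (A.map f) w := by
  induction w generalizing A with
  | nil => rfl
  | cons j w ih =>
    rw [foldc_cons, foldc_cons, ih, Subgroup.map_commutator]

theorem map_nest {H H' : Type*} [Group H] [Group H'] (f : H →* H') (F : Fin n → Subgroup H)
    (w : List (Fin n)) : (nest F w).map f = nest (fun i => (F i).map f) w := by
  cases w with
  | nil => simp [nest_nil]
  | cons a w => rw [nest_cons, nest_cons, map_foldc]

/-- The subgroups of the free product given by the images of the free factors. -/
def Khat (K : Fin n → Subgroup G) : Fin n → Subgroup (Monoid.CoprodI (fun i => ↥(K i))) :=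
  fun i => (Monoid.CoprodI.of (M := fun i => ↥(K i)) (i := i)).range

theorem piHat_comp_of (K : Fin n → Subgroup G) (k i : Fin n) :
    (piHat K k).comp (Monoid.CoprodI.of (M := fun i => ↥(K i)) (i := i))
      = if i = k then (1 : ↥(K i) →* Monoid.CoprodI (fun i => ↥(K i)))
          else Monoid.CoprodI.of (M := fun i => ↥(K i)) (i := i) := by
  refine MonoidHom.ext fun a => ?_
  rw [MonoidHom.comp_apply, piHat, Monoid.CoprodI.lift_of]

theorem map_piHat_Khat (K : Fin n → Subgroup G) (k i : Fin n) :
    (Khat K i).map (piHat K k) = if i = k then ⊥ else Khat K i := by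
  rw [Khat, MonoidHom.map_range, piHat_comp_of]
  by_cases h : i = k
  · rw [if_pos h, if_pos h, MonoidHom.range_one]
  · rw [if_neg h, if_neg h]

theorem kap_comp_of (K : Fin n → Subgroup G) (i : Fin n) :
    (kap K).comp (Monoid.CoprodI.of (M := fun i => ↥(K i)) (i := i)) = (K i).subtype := by
  refine MonoidHom.ext fun a => ?_
  rw [MonoidHom.comp_apply, kap, Monoid.CoprodI.lift_of]

theorem map_kap_Khat (K : Fin n → Subgroup G) (i : Fin n) :
    (Khat K i).map (kap K) = K i := by
  rw [Khat, MonoidHom.map_range, kap_comp_of, Subgroup.range_subtype]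

theorem nested_le_higgins (hn : n ≠ 0) (σ : Equiv.Perm (Fin n)) :
    nestedCommutator (fun i => K (σ i)) ≤ higgins K := by
  rw [← nest_ofFn K hn (⇑σ)]
  have h1 : nest K (List.ofFn ⇑σ) = (nest (Khat K) (List.ofFn ⇑σ)).map (kap K) := by
    rw [map_nest]
    congr 1
    funext i
    rw [map_kap_Khat]
  have h2 : nest (Khat K) (List.ofFn ⇑σ) ≤ cosmash K := by
    rw [cosmash]
    refine le_iInf fun k => ?_
    refine (Subgroup.map_eq_bot_iff _).mp ?_
    rw [map_nest]
    refine nest_eq_bot (k := k) ?_ ?_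
    · rw [map_piHat_Khat, if_pos rfl]
    · rw [List.mem_ofFn]
      exact ⟨σ.symm k, by simp⟩
  rw [h1]
  exact Subgroup.map_mono h2

theorem kap_mem_of_cosmash (hK : ∀ i, (K i).Normal) {x : Monoid.CoprodI (fun i => ↥(K i))}
    (hx : x ∈ cosmash K) : kap K x ∈ DD K Finset.univ := by
  have hx' : ∀ k, piHat K k x = 1 := by
    intro k
    have h1 : x ∈ (piHat K k).ker := by
      have h2 : x ∈ ⨅ k, (piHat K k).ker := hx
      exact Subgroup.mem_iInf.mp h2 k
    exact h1
  have hc : kap K x = gc (List.finRange n) (Psi K x) := (gc_Psi_of_cosmash K hx' _).symm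
  have hmem := Coh_Psi K hK x (List.finRange n) []
  rw [shL_nil, List.toFinset_finRange] at hmem
  rw [hc]
  exact hmem

end HigginsAux

open HigginsAux

/-- For `n ≥ 3` and normal subgroups `K₁, …, Kₙ` of `G`, the `n`-fold Higgins commutator
decomposes as the join, over all permutations `σ` of `Fin n`, of the left-nested binary
commutator subgroups `⁅⋯⁅⁅K_{σ(1)}, K_{σ(2)}⁆, K_{σ(3)}⁆, …, K_{σ(n)}⁆`. -/
theorem higgins_eq_iSup_nested_commutators {G : Type*} [Group G] {n : ℕ} (hn : 3 ≤ n)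
    (K : Fin n → Subgroup G) (hK : ∀ i, (K i).Normal) :
    higgins K = ⨆ σ : Equiv.Perm (Fin n), nestedCommutator (fun i => K (σ i)) := by
  have hn0 : n ≠ 0 := by omega
  apply le_antisymm
  · intro g hg
    obtain ⟨x, hx, rfl⟩ := hg
    exact DD_univ_le K hn0 hK (kap_mem_of_cosmash K hK hx)
  · exact iSup_le fun σ => nested_le_higgins K hn0 σ
end
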